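/- With A ∈ GL_n(ℂ), AᵀA diagonal, selecting the first v rows and columns, assume the rows of A_(v) and of A^(v) are basic sets for the rows of Ā_(v) and Ā^(v) respectively. If d_{ij} (v+1 ≤ i ≤ n, 1 ≤ j ≤ v) are the decomposition numbers expanding the last n−v rows of Ā_(v) in terms of the rows of A_(v), and d′_{ji} are the analogous decomposition numbers for Ā^(v), then d_{ij} = −d′_{ji}; moreover with D̂ = (d_{ij}), the two Cartan matrices satisfy C_(v) = E_v + D̂ᵀD̂ and C^(v) = E_{n−v} + D̂D̂ᵀ. -/

import Mathlib

open Matrix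

section Aux

variable {n v : ℕ}

def emb1 (hv : v ≤ n) : Fin v → Fin n := Fin.castLE hv

def emb2 (hv : v ≤ n) : Fin (n - v) → Fin n := fun a => ⟨v + a.1, lt_tsub_iff_left.mp a.2⟩

lemma sum_split (hv : v ≤ n) {M : Type*} [AddCommMonoid M] (f : Fin n → M) :
    ∑ k, f k = (∑ k : Fin v, f (emb1 hv k)) + ∑ k : Fin (n - v), f (emb2 hv k) := by
  have h : v + (n - v) = n := by omega
  rw [← Fintype.sum_equiv ((finSumFinEquiv).trans (finCongr h))
      (fun x => f (((finSumFinEquiv).trans (finCongr h)) x)) f (fun x => rfl),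
    Fintype.sum_sum_type]
  rfl

end Aux


/-- **Corollary 2.5.** Let `A ∈ GL_n(ℂ)` with `Aᵀ A` diagonal, and select the first `v` rows and
columns, so that `A_(v)` is the upper-left `v × v` block, `A^(v)` the lower-right block, `Ā_(v)`
the first `v` columns and `Ā^(v)` the last `n - v` columns of `A`.  Assume the rows of `A_(v)`
and of `A^(v)` are basic sets for the rows of `Ā_(v)` and `Ā^(v)`, respectively, with
(nontrivial) decomposition numbers `d_{ij} = D̂ i j` (expanding the last `n - v` rows of `Ā_(v)`
in the rows of `A_(v)`) and `d′_{ji} = D' j i` (expanding the first `v` rows of `Ā^(v)` in the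
rows of `A^(v)`).  Then `d_{ij} = − d′_{ji}`, and the two Cartan matrices (formed as `DᵀD` from
the full decomposition matrices, which contain an identity block on the basic-set rows) are
`C_(v) = E_v + D̂ᵀ D̂` and `C^(v) = E_{n-v} + D̂ D̂ᵀ`. -/
theorem decomposition_duality_and_Cartan (n v : ℕ) (hv : v ≤ n)
    (A : Matrix (Fin n) (Fin n) ℂ) (hA : IsUnit A.det)
    (z : Fin n → ℂ) (hdiag : Aᵀ * A = Matrix.diagonal z)
    -- the two basic set assumptions
    (hbasic₁ : (LinearIndependent ℤ fun a : Fin v => fun c : Fin v =>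
        A (Fin.castLE hv a) (Fin.castLE hv c)) ∧
      Submodule.span ℤ (Set.range fun a : Fin v => fun c : Fin v =>
          A (Fin.castLE hv a) (Fin.castLE hv c)) =
        Submodule.span ℤ (Set.range fun r : Fin n => fun c : Fin v =>
          A r (Fin.castLE hv c)))
    (hbasic₂ : (LinearIndependent ℤ fun a : Fin (n - v) => fun c : Fin (n - v) =>
        A ⟨v + a.1, by omega⟩ ⟨v + c.1, by omega⟩) ∧
      Submodule.span ℤ (Set.range fun a : Fin (n - v) => fun c : Fin (n - v) =>
          A ⟨v + a.1, by omega⟩ ⟨v + c.1, by omega⟩) =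
        Submodule.span ℤ (Set.range fun r : Fin n => fun c : Fin (n - v) =>
          A r ⟨v + c.1, by omega⟩))
    -- the nontrivial decomposition numbers for `Ā_(v)` w.r.t. the rows of `A_(v)` …
    (Dhat : Matrix (Fin (n - v)) (Fin v) ℤ)
    (hDhat : ∀ (a : Fin (n - v)) (c : Fin v),
      A ⟨v + a.1, by omega⟩ (Fin.castLE hv c) =
        ∑ j : Fin v, (Dhat a j : ℂ) * A (Fin.castLE hv j) (Fin.castLE hv c))
    -- … and those for `Ā^(v)` w.r.t. the rows of `A^(v)`
    (D' : Matrix (Fin v) (Fin (n - v)) ℤ)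
    (hD' : ∀ (a : Fin v) (c : Fin (n - v)),
      A (Fin.castLE hv a) ⟨v + c.1, by omega⟩ =
        ∑ j : Fin (n - v), (D' a j : ℂ) * A ⟨v + j.1, by omega⟩ ⟨v + c.1, by omega⟩)
    -- the full decomposition matrices, with identity blocks on the basic-set rows
    (fullD : Matrix (Fin n) (Fin v) ℤ)
    (hfullD : fullD = fun r j => if h : r.1 < v then (if (⟨r.1, h⟩ : Fin v) = j then 1 else 0)
      else Dhat ⟨r.1 - v, by omega⟩ j)
    (fullD' : Matrix (Fin n) (Fin (n - v)) ℤ)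
    (hfullD' : fullD' = fun r j => if h : r.1 < v then D' ⟨r.1, h⟩ j
      else (if (⟨r.1 - v, by omega⟩ : Fin (n - v)) = j then 1 else 0)) :
    (∀ (a : Fin (n - v)) (c : Fin v), Dhat a c = - D' c a) ∧
    fullDᵀ * fullD = 1 + Dhatᵀ * Dhat ∧
    fullD'ᵀ * fullD' = 1 + Dhat * Dhatᵀ := by
  have part1 : ∀ (a : Fin (n - v)) (c : Fin v), Dhat a c = - D' c a := by
    classical
    set w : Fin n → ℂ := fun k => (z k)⁻¹ with hw
    have hzne : ∀ k, z k ≠ 0 := by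
      have hdet : A.det ≠ 0 := hA.ne_zero
      have hprod : ∏ k, z k ≠ 0 := by
        have h1 : (Matrix.diagonal z).det = A.det * A.det := by
          rw [← hdiag, det_mul, det_transpose]
        rw [det_diagonal] at h1
        rw [h1]
        exact mul_ne_zero hdet hdet
      intro k hk
      exact hprod (Finset.prod_eq_zero (Finset.mem_univ k) hk)
    have horth : A * Matrix.diagonal w * Aᵀ = 1 := by
      have h1 : (Matrix.diagonal w * Aᵀ) * A = 1 := by
        rw [Matrix.mul_assoc, hdiag, diagonal_mul_diagonal]
        have h2 : (fun i => w i * z i) = fun _ => (1 : ℂ) := by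
          funext k; exact inv_mul_cancel₀ (hzne k)
        rw [h2, Matrix.diagonal_one]
      rw [Matrix.mul_assoc]
      exact mul_eq_one_comm.mp h1
    have hkey : ∀ i j, (∑ k, A i k * w k * A j k) = if i = j then 1 else 0 := by
      intro i j
      have h := congrFun (congrFun horth i) j
      rw [Matrix.mul_apply] at h
      simp only [Matrix.mul_diagonal, Matrix.transpose_apply, Matrix.one_apply] at h
      exact h
    have hblock : ∀ i j : Fin n,
        (∑ k : Fin v, A i (emb1 hv k) * w (emb1 hv k) * A j (emb1 hv k)) +
        (∑ k : Fin (n - v), A i (emb2 hv k) * w (emb2 hv k) * A j (emb2 hv k)) =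
        if i = j then 1 else 0 := by
      intro i j
      rw [← sum_split hv (fun k => A i k * w k * A j k)]
      exact hkey i j
    set A11 := A.submatrix (emb1 hv) (emb1 hv) with hA11
    set A12 := A.submatrix (emb1 hv) (emb2 hv) with hA12d
    set A21 := A.submatrix (emb2 hv) (emb1 hv) with hA21d
    set A22 := A.submatrix (emb2 hv) (emb2 hv) with hA22
    set W1 := Matrix.diagonal (fun k => w (emb1 hv k)) with hW1
    set W2 := Matrix.diagonal (fun k => w (emb2 hv k)) with hW2
    set Dc := Dhat.map (Int.cast : ℤ → ℂ) with hDc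
    set Ec := D'.map (Int.cast : ℤ → ℂ) with hEc
    have hA21 : A21 = Dc * A11 := by
      ext a c
      simp only [hA21d, hA11, hDc, Matrix.mul_apply, Matrix.submatrix_apply, Matrix.map_apply]
      exact hDhat a c
    have hA12 : A12 = Ec * A22 := by
      ext a c
      simp only [hA12d, hA22, hEc, Matrix.mul_apply, Matrix.submatrix_apply, Matrix.map_apply]
      exact hD' a c
    have entry3 : ∀ {p q r : ℕ} (M : Matrix (Fin p) (Fin q) ℂ) (N : Matrix (Fin r) (Fin q) ℂ)
        (d : Fin q → ℂ) (i : Fin p) (j : Fin r),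
        (M * Matrix.diagonal d * Nᵀ) i j = ∑ k, M i k * d k * N j k := by
      intro p q r M N d i j
      rw [Matrix.mul_apply]
      simp only [Matrix.mul_diagonal, Matrix.transpose_apply]
    have e11 : A11 * W1 * A11ᵀ + A12 * W2 * A12ᵀ = 1 := by
      ext i j
      have h := hblock (emb1 hv i) (emb1 hv j)
      have hij : emb1 hv i = emb1 hv j ↔ i = j := by
        rw [Fin.ext_iff, Fin.ext_iff]; simp [emb1]
      simp only [hij] at h
      rw [Matrix.add_apply, hA11, hA12d, hW1, hW2, entry3, entry3, Matrix.one_apply]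
      simpa [Matrix.submatrix_apply] using h
    have e12 : A11 * W1 * A21ᵀ + A12 * W2 * A22ᵀ = 0 := by
      ext i j
      have h := hblock (emb1 hv i) (emb2 hv j)
      have hij : ¬ (emb1 hv i = emb2 hv j) := by
        intro hh
        have := congrArg Fin.val hh
        simp only [emb1, emb2, Fin.castLE] at this
        omega
      rw [if_neg hij] at h
      rw [Matrix.add_apply, hA11, hA12d, hA21d, hA22, hW1, hW2, entry3, entry3]
      simpa [Matrix.submatrix_apply] using h
    have e22 : A21 * W1 * A21ᵀ + A22 * W2 * A22ᵀ = 1 := by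
      ext i j
      have h := hblock (emb2 hv i) (emb2 hv j)
      have hij : emb2 hv i = emb2 hv j ↔ i = j := by
        rw [Fin.ext_iff, Fin.ext_iff]; simp [emb2]
      simp only [hij] at h
      rw [Matrix.add_apply, hA21d, hA22, hW1, hW2, entry3, entry3, Matrix.one_apply]
      simpa [Matrix.submatrix_apply] using h
    set X := A11 * W1 * A11ᵀ with hX
    set Y := A22 * W2 * A22ᵀ with hY
    have hXs : Xᵀ = X := by
      rw [hX]
      rw [Matrix.transpose_mul, Matrix.transpose_mul, Matrix.transpose_transpose,
        Matrix.diagonal_transpose, Matrix.mul_assoc]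
    have hYs : Yᵀ = Y := by
      rw [hY]
      rw [Matrix.transpose_mul, Matrix.transpose_mul, Matrix.transpose_transpose,
        Matrix.diagonal_transpose, Matrix.mul_assoc]
    have eq1 : X + Ec * Y * Ecᵀ = 1 := by
      rw [← e11]
      congr 1
      rw [hA12, Matrix.transpose_mul]
      rw [hY]
      simp only [Matrix.mul_assoc]
    have eq2 : X * Dcᵀ + Ec * Y = 0 := by
      rw [← e12]
      congr 1
      · rw [hA21, Matrix.transpose_mul, hX]
        simp only [Matrix.mul_assoc]
      · rw [hA12, hY]
        simp only [Matrix.mul_assoc]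
    have eq3 : Dc * X * Dcᵀ + Y = 1 := by
      rw [← e22]
      congr 1
      rw [hA21, Matrix.transpose_mul, hX]
      simp only [Matrix.mul_assoc]
    have hDY : X * Dcᵀ = -(Ec * Y) := by
      rwa [add_eq_zero_iff_eq_neg] at eq2
    have hXinv : X * (1 - Dcᵀ * Ecᵀ) = 1 := by
      calc X * (1 - Dcᵀ * Ecᵀ) = X - X * Dcᵀ * Ecᵀ := by
            rw [Matrix.mul_sub, Matrix.mul_one, ← Matrix.mul_assoc]
        _ = X + Ec * Y * Ecᵀ := by rw [hDY, Matrix.neg_mul, sub_neg_eq_add]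
        _ = 1 := eq1
    have hYD : Y * Ecᵀ = -(Dc * X) := by
      have h2 := congrArg Matrix.transpose hDY
      simp only [Matrix.transpose_mul, Matrix.transpose_neg, Matrix.transpose_transpose,
        hXs, hYs] at h2
      exact (neg_eq_iff_eq_neg.mpr h2).symm
    have hfinal : Ecᵀ = -Dc := by
      calc Ecᵀ = (Dc * X * Dcᵀ + Y) * Ecᵀ := by rw [eq3, Matrix.one_mul]
        _ = Dc * (X * (Dcᵀ * Ecᵀ)) + Y * Ecᵀ := by
            rw [Matrix.add_mul, Matrix.mul_assoc, Matrix.mul_assoc]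
        _ = Dc * (X * (Dcᵀ * Ecᵀ)) - Dc * X := by rw [hYD, ← sub_eq_add_neg]
        _ = -(Dc * (X * (1 - Dcᵀ * Ecᵀ))) := by
            rw [Matrix.mul_sub X, Matrix.mul_one, Matrix.mul_sub Dc, neg_sub]
        _ = -Dc := by rw [hXinv, Matrix.mul_one]
    intro a c
    have h := congrFun (congrFun hfinal a) c
    simp only [Matrix.transpose_apply, Matrix.neg_apply, hDc, hEc, Matrix.map_apply] at h
    have h3 : ((Dhat a c : ℤ) : ℂ) = ((-D' c a : ℤ) : ℂ) := by
      push_cast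
      linear_combination h
    exact_mod_cast h3
  refine ⟨part1, ?_, ?_⟩
  · have hD1 : ∀ (k : Fin v) (i : Fin v), fullD (emb1 hv k) i = if k = i then 1 else 0 := by
      intro k i
      rw [hfullD]
      simp only []
      rw [dif_pos (show (emb1 hv k).1 < v from k.2)]
      congr 1
    have hD2 : ∀ (k : Fin (n - v)) (i : Fin v), fullD (emb2 hv k) i = Dhat k i := by
      intro k i
      rw [hfullD]
      have hnk : ¬ (emb2 hv k).1 < v := by simp [emb2]
      simp only []
      rw [dif_neg hnk]
      congr 1
      apply Fin.ext
      simp [emb2]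
    ext i j
    rw [Matrix.mul_apply, sum_split hv (fun r => fullDᵀ i r * fullD r j)]
    simp only [Matrix.transpose_apply, hD1, hD2]
    rw [Matrix.add_apply, Matrix.one_apply, Matrix.mul_apply]
    simp only [Matrix.transpose_apply]
    congr 1
    simp only [ite_mul, one_mul, zero_mul, Finset.sum_ite_eq', Finset.mem_univ, if_true]
  · have hE1 : ∀ (k : Fin v) (i : Fin (n - v)), fullD' (emb1 hv k) i = D' k i := by
      intro k i
      rw [hfullD']
      simp only []
      rw [dif_pos (show (emb1 hv k).1 < v from k.2)]
      congr 1
    have hE2 : ∀ (k : Fin (n - v)) (i : Fin (n - v)),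
        fullD' (emb2 hv k) i = if k = i then 1 else 0 := by
      intro k i
      rw [hfullD']
      have hnk : ¬ (emb2 hv k).1 < v := by simp [emb2]
      simp only []
      rw [dif_neg hnk]
      congr 1
      simp only [eq_iff_iff, Fin.ext_iff, emb2]
      omega
    ext i j
    rw [Matrix.mul_apply, sum_split hv (fun r => fullD'ᵀ i r * fullD' r j)]
    simp only [Matrix.transpose_apply, hE1, hE2]
    rw [Matrix.add_apply, Matrix.one_apply, Matrix.mul_apply, add_comm]
    simp only [Matrix.transpose_apply]
    congr 1
    · simp only [ite_mul, one_mul, zero_mul, Finset.sum_ite_eq', Finset.mem_univ, if_true]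
    · apply Finset.sum_congr rfl
      intro k _
      rw [part1 i k, part1 j k]
      ring
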